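/- Let h ∈ ℝ^{(L-1)×(L-1)} be real symmetric, w ∈ ℝ^{L-1}, t ∈ ℝ, n ≥ 0 an integer, and Σ¹, Σ² ∈ ℂ with Im(Σ¹) ≤ 0 and Im(Σ²) ≤ 0. Then |wᵀ(i(2n+1)π - Σ¹ - t h)⁻¹w - wᵀ(i(2n+1)π - Σ² - t h)⁻¹w| ≤ (‖w‖₂² / ((2n+1)π)²) · |Σ¹ - Σ²|. -/

import Mathlib

open Matrix

noncomputable section BathAux

private def eqv {m : ℕ} (x : Fin m → ℂ) : EuclideanSpace ℂ (Fin m) :=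
  (WithLp.equiv 2 (Fin m → ℂ)).symm x

private lemma eqv_inner {m : ℕ} (x y : Fin m → ℂ) :
    inner ℂ (eqv x) (eqv y) = star x ⬝ᵥ y :=
  (EuclideanSpace.inner_toLp_toLp x y).trans (dotProduct_comm _ _)

private lemma herm_im {m : ℕ} (A : Matrix (Fin m) (Fin m) ℂ) (hA : A.IsHermitian)
    (x : Fin m → ℂ) : (star x ⬝ᵥ A *ᵥ x).im = 0 := by
  have h1 : star (star x ⬝ᵥ A *ᵥ x) = star x ⬝ᵥ A *ᵥ x := by
    calc star (star x ⬝ᵥ A *ᵥ x)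
        = star x ᵥ* Aᴴ ⬝ᵥ x := by rw [star_dotProduct, star_star, star_mulVec]
      _ = star x ⬝ᵥ Aᴴ *ᵥ x := (dotProduct_mulVec _ _ _).symm
      _ = star x ⬝ᵥ A *ᵥ x := by rw [hA.eq]
  exact Complex.conj_eq_iff_im.mp h1

private lemma lower_bound {m : ℕ} (A : Matrix (Fin m) (Fin m) ℂ) (hA : A.IsHermitian)
    (z : ℂ) (_hz : 0 ≤ z.im) (x : Fin m → ℂ) :
    z.im * ‖eqv x‖ ≤ ‖eqv ((z • 1 - A) *ᵥ x)‖ := by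
  have hd : star x ⬝ᵥ (z • 1 - A) *ᵥ x
      = z * (star x ⬝ᵥ x) - star x ⬝ᵥ A *ᵥ x := by
    rw [sub_mulVec, dotProduct_sub, smul_mulVec, one_mulVec, dotProduct_smul,
      smul_eq_mul]
  have hxx : star x ⬝ᵥ x = ((‖eqv x‖ ^ 2 : ℝ) : ℂ) := by
    rw [← eqv_inner, inner_self_eq_norm_sq_to_K]
    norm_cast
  have him : (star x ⬝ᵥ (z • 1 - A) *ᵥ x).im = z.im * ‖eqv x‖ ^ 2 := by
    rw [hd, Complex.sub_im, herm_im A hA, sub_zero, hxx, Complex.mul_im]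
    simp [← Complex.ofReal_pow]
  have hCS : ‖(star x ⬝ᵥ (z • 1 - A) *ᵥ x)‖
      ≤ ‖eqv x‖ * ‖eqv ((z • 1 - A) *ᵥ x)‖ := by
    rw [← eqv_inner]
    exact norm_inner_le_norm _ _
  have h2 : z.im * ‖eqv x‖ ^ 2 ≤ ‖eqv x‖ * ‖eqv ((z • 1 - A) *ᵥ x)‖ := by
    calc z.im * ‖eqv x‖ ^ 2 = (star x ⬝ᵥ (z • 1 - A) *ᵥ x).im := him.symm
      _ ≤ |(star x ⬝ᵥ (z • 1 - A) *ᵥ x).im| := le_abs_self _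
      _ ≤ ‖(star x ⬝ᵥ (z • 1 - A) *ᵥ x)‖ := Complex.abs_im_le_norm _
      _ ≤ _ := hCS
  rcases eq_or_lt_of_le (norm_nonneg (eqv x)) with h0 | h0
  · rw [← h0, mul_zero]; exact norm_nonneg _
  · nlinarith [norm_nonneg (eqv ((z • 1 - A) *ᵥ x))]

private lemma isUnit_res {m : ℕ} (A : Matrix (Fin m) (Fin m) ℂ) (hA : A.IsHermitian)
    (z : ℂ) (hz : 0 < z.im) : IsUnit (z • 1 - A) := by
  rw [← Matrix.mulVec_injective_iff_isUnit]
  intro x y hxy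
  have h0 : (z • 1 - A) *ᵥ (x - y) = 0 := by
    rw [mulVec_sub, hxy, sub_self]
  have h1 := lower_bound A hA z hz.le (x - y)
  rw [h0] at h1
  have h2 : ‖eqv (0 : Fin m → ℂ)‖ = 0 := by simp [eqv]
  rw [h2] at h1
  have h3 : ‖eqv (x - y)‖ = 0 := le_antisymm (by nlinarith) (norm_nonneg _)
  have h4 : eqv (x - y) = 0 := norm_eq_zero.mp h3
  have h5 : x - y = 0 := by
    simpa [eqv] using congrArg (WithLp.equiv 2 (Fin m → ℂ)) h4
  exact sub_eq_zero.mp h5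

private lemma inv_bound {m : ℕ} (A : Matrix (Fin m) (Fin m) ℂ) (hA : A.IsHermitian)
    (z : ℂ) (hz : 0 < z.im) (y : Fin m → ℂ) :
    ‖eqv ((z • 1 - A)⁻¹ *ᵥ y)‖ ≤ ‖eqv y‖ / z.im := by
  have hu := isUnit_res A hA z hz
  have h1 : (z • 1 - A) *ᵥ ((z • 1 - A)⁻¹ *ᵥ y) = y := by
    rw [mulVec_mulVec, Matrix.mul_nonsing_inv _ (Matrix.isUnit_iff_isUnit_det _ |>.mp hu),
      one_mulVec]
  have h2 := lower_bound A hA z hz.le ((z • 1 - A)⁻¹ *ᵥ y)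
  rw [h1] at h2
  rw [le_div_iff₀ hz]
  nlinarith [h2]

end BathAux

theorem bath_update_lipschitz (L : ℕ) (h : Matrix (Fin (L - 1)) (Fin (L - 1)) ℝ)
    (hsym : h.IsSymm) (w : Fin (L - 1) → ℝ) (t : ℝ) (n : ℕ)
    (S₁ S₂ : ℂ) (hS₁ : S₁.im ≤ 0) (hS₂ : S₂.im ≤ 0) :
    ‖((fun i => (w i : ℂ)) ⬝ᵥ
            ((Complex.I * ((2 * n + 1) * Real.pi) - S₁) •
                (1 : Matrix (Fin (L - 1)) (Fin (L - 1)) ℂ)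
              - (t : ℂ) • h.map Complex.ofReal)⁻¹ *ᵥ (fun i => (w i : ℂ))
          - (fun i => (w i : ℂ)) ⬝ᵥ
            ((Complex.I * ((2 * n + 1) * Real.pi) - S₂) •
                (1 : Matrix (Fin (L - 1)) (Fin (L - 1)) ℂ)
              - (t : ℂ) • h.map Complex.ofReal)⁻¹ *ᵥ (fun i => (w i : ℂ)))‖
      ≤ (∑ i, (w i) ^ 2) / ((2 * n + 1) * Real.pi) ^ 2 * ‖S₁ - S₂‖ := by
  set w' : Fin (L - 1) → ℂ := fun i => (w i : ℂ) with hw'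
  set A : Matrix (Fin (L - 1)) (Fin (L - 1)) ℂ := (t : ℂ) • h.map Complex.ofReal with hAdef
  set z₁ : ℂ := Complex.I * ((2 * n + 1) * Real.pi) - S₁ with hz₁def
  set z₂ : ℂ := Complex.I * ((2 * n + 1) * Real.pi) - S₂ with hz₂def
  set p : ℝ := (2 * n + 1) * Real.pi with hpdef
  have hp : 0 < p := by positivity
  have hA : A.IsHermitian := by
    rw [Matrix.IsHermitian, hAdef, conjTranspose_smul]
    have h1 : star (t : ℂ) = (t : ℂ) := by simp [Complex.star_def, Complex.conj_ofReal]
    rw [h1]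
    congr 1
    ext i j
    simp only [conjTranspose_apply, Matrix.map_apply, Complex.star_def, Complex.conj_ofReal]
    exact congrFun (congrFun hsym.eq i) j ▸ rfl
  have him1 : z₁.im = p - S₁.im := by
    simp [hz₁def, Complex.sub_im, Complex.mul_im, hpdef]
  have him2 : z₂.im = p - S₂.im := by
    simp [hz₂def, Complex.sub_im, Complex.mul_im, hpdef]
  have hz₁ : p ≤ z₁.im := by rw [him1]; linarith
  have hz₂ : p ≤ z₂.im := by rw [him2]; linarith
  have hz₁0 : 0 < z₁.im := lt_of_lt_of_le hp hz₁
  have hz₂0 : 0 < z₂.im := lt_of_lt_of_le hp hz₂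
  set M₁ : Matrix (Fin (L - 1)) (Fin (L - 1)) ℂ := z₁ • 1 - A with hM₁
  set M₂ : Matrix (Fin (L - 1)) (Fin (L - 1)) ℂ := z₂ • 1 - A with hM₂
  have hu₁ : IsUnit M₁ := isUnit_res A hA z₁ hz₁0
  have hu₂ : IsUnit M₂ := isUnit_res A hA z₂ hz₂0
  have hd₁ : IsUnit M₁.det := (Matrix.isUnit_iff_isUnit_det _).mp hu₁
  have hd₂ : IsUnit M₂.det := (Matrix.isUnit_iff_isUnit_det _).mp hu₂
  have hres : M₁⁻¹ - M₂⁻¹ = (S₁ - S₂) • (M₁⁻¹ * M₂⁻¹) := by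
    have e1 : M₁⁻¹ * M₁ = 1 := Matrix.nonsing_inv_mul _ hd₁
    have e2 : M₂ * M₂⁻¹ = 1 := Matrix.mul_nonsing_inv _ hd₂
    have e3 : M₂ - M₁ = (S₁ - S₂) • (1 : Matrix (Fin (L - 1)) (Fin (L - 1)) ℂ) := by
      rw [hM₁, hM₂, sub_sub_sub_cancel_right, ← sub_smul]
      congr 1
      rw [hz₁def, hz₂def]; ring
    calc M₁⁻¹ - M₂⁻¹ = M₁⁻¹ * (M₂ * M₂⁻¹) - (M₁⁻¹ * M₁) * M₂⁻¹ := by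
          rw [e1, e2, mul_one, one_mul]
      _ = M₁⁻¹ * ((M₂ - M₁) * M₂⁻¹) := by noncomm_ring
      _ = (S₁ - S₂) • (M₁⁻¹ * M₂⁻¹) := by
          rw [e3, Matrix.smul_mul, one_mul, Matrix.mul_smul]
  have hstarw : star w' = w' := by
    funext i
    simp [hw', Pi.star_apply, Complex.star_def, Complex.conj_ofReal]
  set N : ℝ := ‖eqv w'‖ with hN
  have hN0 : 0 ≤ N := norm_nonneg _
  have hNsq : N ^ 2 = ∑ i, (w i) ^ 2 := by
    have h1 : ((N ^ 2 : ℝ) : ℂ) = star w' ⬝ᵥ w' := by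
      rw [← eqv_inner, inner_self_eq_norm_sq_to_K]
      norm_cast
    rw [hstarw] at h1
    have h2 : w' ⬝ᵥ w' = ((∑ i, (w i) ^ 2 : ℝ) : ℂ) := by
      simp only [dotProduct, hw']
      push_cast
      ring_nf
    rw [h2] at h1
    exact_mod_cast h1
  have hinner : ‖(w' ⬝ᵥ (M₁⁻¹ * M₂⁻¹) *ᵥ w')‖ ≤ N * (N / z₂.im / z₁.im) := by
    have hmm : (M₁⁻¹ * M₂⁻¹) *ᵥ w' = M₁⁻¹ *ᵥ (M₂⁻¹ *ᵥ w') := (mulVec_mulVec _ _ _).symm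
    rw [hmm]
    have h1 : w' ⬝ᵥ (M₁⁻¹ *ᵥ (M₂⁻¹ *ᵥ w'))
        = inner ℂ (eqv w') (eqv (M₁⁻¹ *ᵥ (M₂⁻¹ *ᵥ w'))) := by
      rw [eqv_inner, hstarw]
    rw [h1]
    have hb2 : ‖eqv (M₂⁻¹ *ᵥ w')‖ ≤ N / z₂.im := inv_bound A hA z₂ hz₂0 w'
    have hb1 : ‖eqv (M₁⁻¹ *ᵥ (M₂⁻¹ *ᵥ w'))‖ ≤ ‖eqv (M₂⁻¹ *ᵥ w')‖ / z₁.im :=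
      inv_bound A hA z₁ hz₁0 _
    calc ‖(inner ℂ (eqv w') (eqv (M₁⁻¹ *ᵥ (M₂⁻¹ *ᵥ w'))) : ℂ)‖
        ≤ N * ‖eqv (M₁⁻¹ *ᵥ (M₂⁻¹ *ᵥ w'))‖ := norm_inner_le_norm _ _
      _ ≤ N * (N / z₂.im / z₁.im) := by
          apply mul_le_mul_of_nonneg_left _ hN0
          calc ‖eqv (M₁⁻¹ *ᵥ (M₂⁻¹ *ᵥ w'))‖ ≤ ‖eqv (M₂⁻¹ *ᵥ w')‖ / z₁.im := hb1
            _ ≤ N / z₂.im / z₁.im := by gcongr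
  have hdiff : w' ⬝ᵥ M₁⁻¹ *ᵥ w' - w' ⬝ᵥ M₂⁻¹ *ᵥ w'
      = (S₁ - S₂) * (w' ⬝ᵥ (M₁⁻¹ * M₂⁻¹) *ᵥ w') := by
    rw [← dotProduct_sub, ← sub_mulVec, hres, smul_mulVec, dotProduct_smul, smul_eq_mul]
  rw [hdiff, norm_mul]
  calc ‖S₁ - S₂‖ * ‖(w' ⬝ᵥ (M₁⁻¹ * M₂⁻¹) *ᵥ w')‖
      ≤ ‖S₁ - S₂‖ * (N * (N / z₂.im / z₁.im)) :=
        mul_le_mul_of_nonneg_left hinner (norm_nonneg _)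
    _ ≤ ‖S₁ - S₂‖ * (N * (N / p / p)) := by
        apply mul_le_mul_of_nonneg_left _ (norm_nonneg _)
        apply mul_le_mul_of_nonneg_left _ hN0
        gcongr
    _ = (∑ i, (w i) ^ 2) / p ^ 2 * ‖S₁ - S₂‖ := by
        rw [← hNsq]
        field_simp
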